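/- Let P = !![-4, 1, 1, 1; 1, -3, 0, 0; 1, 0, -3, 0; 1, 0, 0, -3] ∈ Matrix (Fin 4) (Fin 4) ℤ. Each of the nine vectors K ∈ {(2,1,1,1), (-2,-1,-1,-1), (-2,3,1,-1), (0,1,3,-1), (4,-1,-1,-1), (-2,1,-1,3), (0,3,-1,1), (-2,-1,3,1), (0,-1,1,3)} satisfies all of: (i) K 0 ∈ {-2, 0, 2, 4} and K i ∈ {-1, 1, 3} for i = 1, 2, 3; (ii) 9 divides 3*(K 0) - 2*(K 1) + 4*(K 2) + (K 3); and (iii) K ⬝ᵥ P⁻¹.mulVec K = -4, computed in ℚ with the rational inverse P⁻¹. -/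

import Mathlib

open Matrix

lemma mapP : ((!![-4, 1, 1, 1; 1, -3, 0, 0; 1, 0, -3, 0; 1, 0, 0, -3] : Matrix (Fin 4) (Fin 4) ℤ).map ((↑) : ℤ → ℚ))
    = !![-4, 1, 1, 1; 1, -3, 0, 0; 1, 0, -3, 0; 1, 0, 0, -3] := by
  ext i j; fin_cases i <;> fin_cases j <;> simp [vecHead, vecTail]

lemma invP : (!![-4, 1, 1, 1; 1, -3, 0, 0; 1, 0, -3, 0; 1, 0, 0, -3] : Matrix (Fin 4) (Fin 4) ℚ)⁻¹
    = !![-1/3, -1/9, -1/9, -1/9; -1/9, -10/27, -1/27, -1/27; -1/9, -1/27, -10/27, -1/27; -1/9, -1/27, -1/27, -10/27] := by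
  apply inv_eq_right_inv
  ext i j; fin_cases i <;> fin_cases j <;>
    norm_num [Matrix.mul_apply, Matrix.one_apply, Fin.sum_univ_four, vecHead, vecTail, Fin.ext_iff, Matrix.cons_val_two, Matrix.cons_val_three]

theorem wahl_nine_vectors :
    let P : Matrix (Fin 4) (Fin 4) ℤ :=
      !![-4, 1, 1, 1; 1, -3, 0, 0; 1, 0, -3, 0; 1, 0, 0, -3]
    ∀ K ∈ ({![2, 1, 1, 1], ![-2, -1, -1, -1], ![-2, 3, 1, -1], ![0, 1, 3, -1],
        ![4, -1, -1, -1], ![-2, 1, -1, 3], ![0, 3, -1, 1], ![-2, -1, 3, 1],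
        ![0, -1, 1, 3]} : Set (Fin 4 → ℤ)),
      (K 0 ∈ ({-2, 0, 2, 4} : Set ℤ) ∧ K 1 ∈ ({-1, 1, 3} : Set ℤ) ∧
        K 2 ∈ ({-1, 1, 3} : Set ℤ) ∧ K 3 ∈ ({-1, 1, 3} : Set ℤ)) ∧
      (9 : ℤ) ∣ (3 * K 0 - 2 * K 1 + 4 * K 2 + K 3) ∧
      (fun i => ((K i : ℤ) : ℚ)) ⬝ᵥ
          (P.map ((↑) : ℤ → ℚ))⁻¹.mulVec (fun i => ((K i : ℤ) : ℚ)) = -4 := by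
  intro P K hK
  rw [show P = !![-4, 1, 1, 1; 1, -3, 0, 0; 1, 0, -3, 0; 1, 0, 0, -3] from rfl, mapP, invP]
  simp only [Set.mem_insert_iff, Set.mem_singleton_iff] at hK
  rcases hK with rfl|rfl|rfl|rfl|rfl|rfl|rfl|rfl|rfl <;>
    refine ⟨⟨by norm_num, by norm_num, by norm_num [Matrix.cons_val_two, Matrix.cons_val_three], by norm_num [Matrix.cons_val_two, Matrix.cons_val_three]⟩, by decide, ?_⟩ <;>
    · simp [Matrix.mulVec, dotProduct, Fin.sum_univ_four, vecHead, vecTail]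
      norm_num
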